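/- arXiv:1501.03056 — 2 statements merged into one kernel-verified Lean document; each statement's English description precedes it below -/
import Mathlib

section
/- Let A ∈ GL_d(R) and let w be a unit vector with ‖Aw‖ = ‖A‖ (operator norm). Then for any vector x ∈ R^d with ‖Ax‖ < ‖x‖, one has |⟨x,w⟩| · ‖Aw‖ ≤ ‖x‖. -/
open RealInnerProductSpace

/-- If `A` is an invertible linear operator on `ℝ^d` and `w` a unit vector with
`‖Aw‖ = ‖A‖`, then for any `x` with `‖Ax‖ < ‖x‖` one has `|⟨x,w⟩|·‖Aw‖ ≤ ‖x‖`. -/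
theorem stmt2 (d : ℕ)
    (A : EuclideanSpace ℝ (Fin d) →L[ℝ] EuclideanSpace ℝ (Fin d))
    (hA : Function.Bijective A)
    (w : EuclideanSpace ℝ (Fin d)) (hw : ‖w‖ = 1) (hAw : ‖A w‖ = ‖A‖)
    (x : EuclideanSpace ℝ (Fin d)) (hx : ‖A x‖ < ‖x‖) :
    |⟪x, w⟫| * ‖A w‖ ≤ ‖x‖ := by
  set c := ⟪x, w⟫ with hc
  set v := x - c • w with hv
  have hww : ⟪w, w⟫ = (1:ℝ) := by
    rw [real_inner_self_eq_norm_sq, hw]; norm_num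
  have hvw : ⟪w, v⟫ = 0 := by
    have hcomm : (inner ℝ w x : ℝ) = inner ℝ x w := real_inner_comm x w
    rw [hv, inner_sub_right, real_inner_smul_right, hww, hcomm, ← hc]
    ring
  have key : ⟪A w, A v⟫ = 0 := by
    set k := ‖A v‖^2 - ‖A‖^2 * ‖v‖^2 with hk
    have hineq : ∀ t : ℝ, 2*t*⟪A w, A v⟫ + t^2 * k ≤ 0 := by
      intro t
      have h1 : ‖A (w + t • v)‖ ≤ ‖A‖ * ‖w + t • v‖ := A.le_opNorm _
      have h2 : ‖A (w + t • v)‖^2 ≤ ‖A‖^2 * ‖w + t • v‖^2 := by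
        nlinarith [norm_nonneg (A (w + t • v)), norm_nonneg (w + t•v), A.opNorm_nonneg]
      have e1 : ‖A (w + t • v)‖^2 = ‖A w‖^2 + 2*t*⟪A w, A v⟫ + t^2 * ‖A v‖^2 := by
        rw [map_add, map_smul, norm_add_sq_real, real_inner_smul_right, norm_smul, mul_pow]
        simp only [Real.norm_eq_abs, sq_abs]
        ring
      have e2 : ‖w + t • v‖^2 = 1 + t^2 * ‖v‖^2 := by
        rw [norm_add_sq_real, real_inner_smul_right, hvw, norm_smul, hw, mul_pow]
        simp only [Real.norm_eq_abs, sq_abs]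
        ring
      rw [e1, e2, hAw] at h2
      nlinarith [hk, sq_nonneg t]
    by_contra hc0
    set c0 := ⟪A w, A v⟫ with hc0d
    have hδ : (0:ℝ) < 1/(1+|k|) := by positivity
    have h3 := hineq (c0 * (1/(1+|k|)))
    have habs : -|k| ≤ k := neg_abs_le k
    have hδ2 : (1/(1+|k|)) * (1+|k|) = 1 := by
      field_simp
    have hc2 : 0 < c0^2 := by positivity
    nlinarith [abs_nonneg k, mul_pos hc2 hδ, sq_nonneg (1/(1+|k|))]
  have hx2 : x = c • w + v := by rw [hv]; abel
  have e3 : ‖A x‖^2 = c^2 * ‖A w‖^2 + ‖A v‖^2 := by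
    rw [hx2, map_add, map_smul, norm_add_sq_real, real_inner_smul_left, key, norm_smul, mul_pow]
    simp only [Real.norm_eq_abs, sq_abs]
    ring
  have h4 : |c| * ‖A w‖ ≤ ‖A x‖ := by
    have h5 : (|c| * ‖A w‖)^2 ≤ ‖A x‖^2 := by
      rw [e3, mul_pow, sq_abs]
      nlinarith [sq_nonneg (‖A v‖)]
    have := mul_nonneg (abs_nonneg c) (norm_nonneg (A w))
    nlinarith [norm_nonneg (A x)]
  linarith
end

section
/- Let M_e = αI + βE_{i_e j_e} be d×d matrices for edges e = (i_e, j_e) with α ≥ 0, β > 0. For edges e₁,...,e_ℓ, every entry of the matrix ∏_{r≤ℓ} M_{e_r} - β^ℓ · [e₁,...,e_ℓ is a connected path] · E_{i₁ j_ℓ} is bounded in absolute value by α·β^{ℓ-1}·2^ℓ, assuming α ≤ β. -/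
namespace Stmt11Aux

variable {d : ℕ}

noncomputable def Mm (α β : ℝ) (a : Fin d × Fin d) : Matrix (Fin d) (Fin d) ℝ :=
  α • 1 + β • Matrix.single a.1 a.2 1

def Q (β : ℝ) : List (Fin d × Fin d) → Fin d → Fin d → ℝ
  | [], i, j => if i = j then 1 else 0
  | a :: L, i, j => (if i = a.1 then β else 0) * Q β L a.2 j

lemma Mm_mul_apply (α β : ℝ) (a : Fin d × Fin d) (P : Matrix (Fin d) (Fin d) ℝ) (i j : Fin d) :
    (Mm α β a * P) i j = α * P i j + β * (if i = a.1 then P a.2 j else 0) := by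
  simp [Mm, Matrix.add_mul, Matrix.smul_mul, Matrix.mul_apply, Matrix.single,
    Matrix.one_apply, ite_and, eq_comm, Finset.mul_sum]
  rw [Finset.sum_congr rfl (fun x _ => add_mul _ _ _), Finset.sum_add_distrib]
  congr 1
  · simp [ite_mul, Finset.sum_ite_eq]
  · split_ifs with h
    · simp [ite_mul, Finset.sum_ite_eq']
    · simp

lemma prod_bound (α β : ℝ) (hα : 0 ≤ α) (hβ : 0 ≤ β) :
    ∀ L : List (Fin d × Fin d), ∀ i j : Fin d,
      0 ≤ (L.map (Mm α β)).prod i j ∧ (L.map (Mm α β)).prod i j ≤ (α + β) ^ L.length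
  | [], i, j => by
    simp [Matrix.one_apply]
    split_ifs <;> norm_num
  | a :: L, i, j => by
    simp only [List.map_cons, List.prod_cons, List.length_cons, Mm_mul_apply]
    have h1 := prod_bound α β hα hβ L i j
    have h2 := prod_bound α β hα hβ L a.2 j
    constructor
    · have h3 : (0:ℝ) ≤ if i = a.1 then (L.map (Mm α β)).prod a.2 j else 0 := by
        split_ifs; exacts [h2.1, le_refl 0]
      exact add_nonneg (mul_nonneg hα h1.1) (mul_nonneg hβ h3)
    · have hle : (if i = a.1 then (L.map (Mm α β)).prod a.2 j else 0) ≤ (α + β) ^ L.length := by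
        split_ifs
        · exact h2.2
        · positivity
      calc α * (L.map (Mm α β)).prod i j + β * _
          ≤ α * (α+β)^L.length + β * (α+β)^L.length := by
            gcongr
            exact h1.2
        _ = (α + β) ^ (L.length + 1) := by ring

lemma arith (α β : ℝ) (hα : 0 ≤ α) (hβ : 0 < β) (hαβ : α ≤ β) (m : ℕ) :
    α * (α + β) ^ m + β * (α * β ^ (m - 1) * (2 ^ m - 1))
      ≤ α * β ^ (m + 1 - 1) * (2 ^ (m + 1) - 1) := by
  cases m with
  | zero => simp; ring_nf; linarith
  | succ n =>
    have hpow : (α + β) ^ (n + 1) ≤ 2 ^ (n+1) * β ^ (n+1) := by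
      rw [show (2:ℝ) ^ (n+1) * β ^ (n+1) = (2*β)^(n+1) by ring]
      gcongr <;> linarith
    simp only [Nat.add_sub_cancel]
    calc α * (α + β) ^ (n+1) + β * (α * β ^ n * (2 ^ (n+1) - 1))
        ≤ α * (2^(n+1) * β^(n+1)) + β * (α * β ^ n * (2 ^ (n+1) - 1)) := by
          gcongr
      _ = α * β ^ (n + 1) * (2 ^ (n + 1 + 1) - 1) := by ring

lemma key (α β : ℝ) (hα : 0 ≤ α) (hβ : 0 < β) (hαβ : α ≤ β) :
    ∀ L : List (Fin d × Fin d), ∀ i j : Fin d,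
      |(L.map (Mm α β)).prod i j - Q β L i j| ≤ α * β ^ (L.length - 1) * (2 ^ L.length - 1)
  | [], i, j => by
    simp [Matrix.one_apply, Q]
  | a :: L, i, j => by
    simp only [List.map_cons, List.prod_cons, List.length_cons, Mm_mul_apply, Q]
    set P := (L.map (Mm α β)).prod with hP
    have key1 := key α β hα hβ hαβ L a.2 j
    have hub := (prod_bound α β hα hβ.le L i j).2
    have hlb := (prod_bound α β hα hβ.le L i j).1
    have hRHS : (0:ℝ) ≤ α * β ^ (L.length - 1) * (2 ^ L.length - 1) := by
      have h1 : (1:ℝ) ≤ 2 ^ L.length := one_le_pow₀ (by norm_num)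
      have h2 := pow_nonneg hβ.le (L.length - 1)
      have := mul_nonneg hα h2
      nlinarith
    have h2 : |β * (if i = a.1 then P a.2 j else 0) - (if i = a.1 then β else 0) * Q β L a.2 j|
        ≤ β * (α * β ^ (L.length - 1) * (2 ^ L.length - 1)) := by
      split_ifs with h
      · rw [show β * P a.2 j - β * Q β L a.2 j = β * (P a.2 j - Q β L a.2 j) by ring,
          abs_mul, abs_of_pos hβ]
        gcongr
      · simpa using mul_nonneg hβ.le hRHS
    have hsplit : (α * P i j + β * (if i = a.1 then P a.2 j else 0))
          - (if i = a.1 then β else 0) * Q β L a.2 j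
        = α * P i j + (β * (if i = a.1 then P a.2 j else 0)
          - (if i = a.1 then β else 0) * Q β L a.2 j) := by ring
    rw [hsplit]
    have habs : |α * P i j| ≤ α * (α + β) ^ L.length := by
      rw [abs_mul, abs_of_nonneg hα, abs_of_nonneg hlb]
      exact mul_le_mul_of_nonneg_left hub hα
    calc _ ≤ |α * P i j| + _ := abs_add_le _ _
      _ ≤ α * (α + β) ^ L.length + β * (α * β ^ (L.length - 1) * (2 ^ L.length - 1)) :=
          add_le_add habs h2
      _ ≤ α * β ^ (L.length + 1 - 1) * (2 ^ (L.length + 1) - 1) :=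
          arith α β hα hβ hαβ L.length


lemma Q_eq (β : ℝ) : ∀ (L : List (Fin d × Fin d)) (a : Fin d × Fin d) (i j : Fin d),
    Q β (a :: L) i j = β ^ (L.length + 1) *
      (if List.IsChain (fun x y => x.2 = y.1) (a :: L) then 1 else 0) *
      (if a.1 = i ∧ ((a :: L).getLast (List.cons_ne_nil a L)).2 = j then 1 else 0)
  | [], a, i, j => by
    simp [Q]
    split_ifs
    all_goals try ring
    all_goals simp_all
  | b :: L, a, i, j => by
    have IH := Q_eq β L b a.2 j
    simp only [Q] at IH ⊢
    rw [IH, List.getLast_cons (List.cons_ne_nil b L), List.length_cons]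
    simp only [List.isChain_cons_cons]
    have e1 : (i = a.1) = (a.1 = i) := by simp [eq_comm]
    have e2 : (a.2 = b.1) = (b.1 = a.2) := by simp [eq_comm]
    simp only [e1, e2]
    split_ifs
    all_goals try ring
    all_goals tauto

lemma getLast_congr {X : Type*} {L1 L2 : List X} (h : L1 = L2) (h1 : L1 ≠ []) :
    L1.getLast h1 = L2.getLast (h ▸ h1) := by subst h; rfl

end Stmt11Aux

/-- For matrices `M_e = αI + βE_{i_e j_e}` with `0 ≤ α ≤ β`, `β > 0`, every
entry of `∏_{r≤ℓ} M_{e_r} - β^ℓ·[e₁,…,e_ℓ is a connected path]·E_{i₁ j_ℓ}` is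
bounded in absolute value by `α·β^{ℓ-1}·2^ℓ`. -/
theorem stmt11 (d ℓ : ℕ) (hℓ : 1 ≤ ℓ) (α β : ℝ) (hα : 0 ≤ α) (hβ : 0 < β)
    (hαβ : α ≤ β) (e : Fin ℓ → Fin d × Fin d) (i j : Fin d) :
    |((List.ofFn fun r : Fin ℓ =>
          α • (1 : Matrix (Fin d) (Fin d) ℝ) +
            β • Matrix.single (e r).1 (e r).2 (1 : ℝ)).prod -
        β ^ ℓ •
          (if ∀ r : Fin ℓ, ∀ h : (r : ℕ) + 1 < ℓ, (e r).2 = (e ⟨(r : ℕ) + 1, h⟩).1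
            then (1 : ℝ) else 0) •
          Matrix.single (e ⟨0, hℓ⟩).1 (e ⟨ℓ - 1, Nat.sub_lt hℓ one_pos⟩).2
            (1 : ℝ)) i j|
      ≤ α * β ^ (ℓ - 1) * 2 ^ ℓ := by
  obtain ⟨n, rfl⟩ : ∃ n, ℓ = n + 1 := ⟨ℓ - 1, by omega⟩
  open Stmt11Aux in
  have hmap : (List.ofFn fun r : Fin (n+1) =>
      α • (1 : Matrix (Fin d) (Fin d) ℝ) +
        β • Matrix.single (e r).1 (e r).2 (1 : ℝ))
      = (List.ofFn e).map (Mm α β) := by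
    rw [List.map_ofFn]
    rfl
  have hcons : List.ofFn e = e 0 :: List.ofFn (fun r : Fin n => e r.succ) :=
    List.ofFn_succ (f := e)
  have hlast : ((e 0 :: List.ofFn (fun r : Fin n => e r.succ)).getLast
        (List.cons_ne_nil _ _)) = e ⟨n, lt_add_one n⟩ := by
    rw [← Stmt11Aux.getLast_congr hcons (by simp [hcons])]
    rw [List.getLast_ofFn]
    congr 1
  have hchain : (∀ r : Fin (n+1), ∀ h : (r : ℕ) + 1 < n + 1,
        (e r).2 = (e ⟨(r : ℕ) + 1, h⟩).1)
      ↔ List.IsChain (fun x y => x.2 = y.1) (List.ofFn e) := by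
    rw [List.isChain_ofFn]
    constructor
    · intro h k hk
      exact h ⟨k, by omega⟩ hk
    · intro h r hr
      exact h r hr
  have hQ : Stmt11Aux.Q β (List.ofFn e) i j
      = β ^ (n + 1) *
        (if ∀ r : Fin (n+1), ∀ h : (r : ℕ) + 1 < n + 1,
            (e r).2 = (e ⟨(r : ℕ) + 1, h⟩).1 then (1:ℝ) else 0) *
        (if (e 0).1 = i ∧ (e ⟨n, lt_add_one n⟩).2 = j then (1:ℝ) else 0) := by
    rw [hcons, Stmt11Aux.Q_eq]
    rw [hlast]
    simp only [List.length_ofFn]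
    congr 1
    congr 1
    rw [← hcons]
    exact (if_congr hchain.symm rfl rfl)
  have hsub : (β ^ (n+1) •
        (if ∀ r : Fin (n+1), ∀ h : (r : ℕ) + 1 < n + 1,
            (e r).2 = (e ⟨(r : ℕ) + 1, h⟩).1 then (1:ℝ) else 0) •
        Matrix.single (e ⟨0, hℓ⟩).1
          (e ⟨n + 1 - 1, Nat.sub_lt hℓ one_pos⟩).2 (1 : ℝ)) i j
      = Stmt11Aux.Q β (List.ofFn e) i j := by
    rw [hQ]
    have h0 : (⟨0, hℓ⟩ : Fin (n+1)) = 0 := rfl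
    have hn' : (⟨n + 1 - 1, Nat.sub_lt hℓ one_pos⟩ : Fin (n+1)) = ⟨n, lt_add_one n⟩ := rfl
    rw [h0, hn']
    simp only [Matrix.smul_apply, smul_eq_mul, Matrix.single]
    simp only [Matrix.of_apply]
    split_ifs <;> ring
  rw [Matrix.sub_apply, hmap, hsub]
  calc |((List.ofFn e).map (Mm α β)).prod i j - Stmt11Aux.Q β (List.ofFn e) i j|
      ≤ α * β ^ ((List.ofFn e).length - 1) * (2 ^ (List.ofFn e).length - 1) :=
        Stmt11Aux.key α β hα hβ hαβ (List.ofFn e) i j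
    _ ≤ α * β ^ (n + 1 - 1) * 2 ^ (n + 1) := by
        simp only [List.length_ofFn]
        have h1 : (0:ℝ) ≤ α * β ^ (n + 1 - 1) := mul_nonneg hα (pow_nonneg hβ.le _)
        nlinarith [pow_nonneg (show (0:ℝ) ≤ 2 by norm_num) (n+1)]
end
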